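/- Let $(\alpha_j)_{j\ge 1}$ be nonnegative reals and $0 < k < 1$ with $\sum_{j=1}^{\infty} \alpha_j^k < \infty$. Then the sums $S_s := \sum_{u \subseteq \{1,\dots,s\}} \left(|u|! \prod_{j\in u}\alpha_j\right)^k$ are bounded uniformly in $s$; that is, $\sup_{s\ge 1} S_s \le \sum_{\ell=0}^{\infty} (\ell!)^{k-1} A^{\ell} < \infty$, where $A = \sum_{j=1}^{\infty} \alpha_j^k$. -/

import Mathlib

open Finset

/-- Key combinatorial lemma: `ℓ! * e_ℓ(β) ≤ (∑ β)^ℓ` for nonnegative `β`. -/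
lemma key_esymm_le (t : Finset ℕ) (β : ℕ → ℝ) (hβ : ∀ j, 0 ≤ β j) (ℓ : ℕ) :
    (Nat.factorial ℓ : ℝ) * ∑ u ∈ t.powersetCard ℓ, ∏ j ∈ u, β j
      ≤ (∑ j ∈ t, β j) ^ ℓ := by
  classical
  rw [Finset.sum_pow_eq_sum_piAntidiag, Finset.mul_sum]
  set e : Finset ℕ → (ℕ → ℕ) := fun u => fun i => if i ∈ u then 1 else 0 with he
  have hinj : Set.InjOn e (t.powersetCard ℓ : Set (Finset ℕ)) := by
    intro u _ v _ h
    ext i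
    have := congrFun h i
    simp only [e] at this
    by_cases hu : i ∈ u <;> by_cases hv : i ∈ v <;> simp_all
  have hsubset : (t.powersetCard ℓ).image e ⊆ Finset.piAntidiag t ℓ := by
    intro k hk
    rw [Finset.mem_image] at hk
    obtain ⟨u, hu, rfl⟩ := hk
    rw [Finset.mem_powersetCard] at hu
    rw [Finset.mem_piAntidiag]
    constructor
    · have : ∑ i ∈ t, e u i = ∑ i ∈ t, (if i ∈ u then 1 else 0) := rfl
      rw [this, Finset.sum_ite_mem, Finset.inter_eq_right.mpr hu.1, ← hu.2,
        Finset.card_eq_sum_ones]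
    · intro i hi
      by_contra hit
      have : e u i = 0 := by
        simp only [e, if_neg (fun h => hit (hu.1 h))]
      exact hi this
  have heq : ∑ u ∈ t.powersetCard ℓ, (Nat.factorial ℓ : ℝ) * ∏ j ∈ u, β j
      = ∑ k ∈ (t.powersetCard ℓ).image e,
          (Nat.multinomial t k : ℝ) * ∏ i ∈ t, β i ^ k i := by
    rw [Finset.sum_image hinj]
    refine Finset.sum_congr rfl fun u hu => ?_
    rw [Finset.mem_powersetCard] at hu
    have hprodfact : ∏ i ∈ t, (e u i).factorial = 1 := by
      refine Finset.prod_eq_one fun i _ => ?_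
      simp only [e]
      split_ifs <;> simp [Nat.factorial]
    have hsum : ∑ i ∈ t, e u i = ℓ := by
      have : ∑ i ∈ t, e u i = ∑ i ∈ t, (if i ∈ u then 1 else 0) := rfl
      rw [this, Finset.sum_ite_mem, Finset.inter_eq_right.mpr hu.1, ← hu.2,
        Finset.card_eq_sum_ones]
    have hmult : Nat.multinomial t (e u) = Nat.factorial ℓ := by
      have := Nat.multinomial_spec t (e u)
      rw [hprodfact, one_mul, hsum] at this
      exact this
    have hprod : ∏ i ∈ t, β i ^ e u i = ∏ j ∈ u, β j := by
      have : ∀ i ∈ t, β i ^ e u i = (if i ∈ u then β i else 1) := by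
        intro i _
        simp only [e]
        split_ifs <;> simp
      rw [Finset.prod_congr rfl this, Finset.prod_ite_mem,
        Finset.inter_eq_right.mpr hu.1]
    rw [hmult, hprod]
  rw [heq]
  refine Finset.sum_le_sum_of_subset_of_nonneg hsubset fun k _ _ => ?_
  have h1 : (0:ℝ) ≤ (Nat.multinomial t k : ℝ) := Nat.cast_nonneg _
  have h2 : (0:ℝ) ≤ ∏ i ∈ t, β i ^ k i :=
    Finset.prod_nonneg fun i _ => pow_nonneg (hβ i) _
  positivity

theorem stmt_2 (α : ℕ → ℝ) (hα : ∀ j, 0 ≤ α j) (k : ℝ) (hk0 : 0 < k) (hk1 : k < 1)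
    (hsum : Summable (fun j => (α j) ^ k)) :
    Summable (fun ℓ : ℕ =>
        (Nat.factorial ℓ : ℝ) ^ (k - 1) * (∑' j, (α j) ^ k) ^ ℓ) ∧
      ∀ s : ℕ, 1 ≤ s →
        ∑ u ∈ (Finset.range s).powerset,
            ((Nat.factorial u.card : ℝ) * ∏ j ∈ u, α j) ^ k
          ≤ ∑' ℓ : ℕ,
              (Nat.factorial ℓ : ℝ) ^ (k - 1) * (∑' j, (α j) ^ k) ^ ℓ := by
  classical
  set A : ℝ := ∑' j, (α j) ^ k with hA
  have hA0 : 0 ≤ A := tsum_nonneg fun j => Real.rpow_nonneg (hα j) k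
  set f : ℕ → ℝ := fun ℓ => (Nat.factorial ℓ : ℝ) ^ (k - 1) * A ^ ℓ with hf
  have hfnonneg : ∀ ℓ, 0 ≤ f ℓ := by
    intro ℓ
    exact mul_nonneg (Real.rpow_nonneg (Nat.cast_nonneg _) _) (pow_nonneg hA0 _)
  -- Summability of f
  have hSummable : Summable f := by
    rcases eq_or_lt_of_le hA0 with hA0' | hApos
    · -- A = 0: f ℓ = 0 for ℓ ≥ 1
      refine summable_of_ne_finset_zero (s := {0}) fun ℓ hℓ => ?_
      have hℓ0 : ℓ ≠ 0 := by simpa using hℓ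
      simp [f, ← hA0', zero_pow hℓ0]
    · -- A > 0: ratio test
      refine summable_of_ratio_test_tendsto_lt_one (l := 0) one_pos
        (Filter.Eventually.of_forall fun n => ?_) ?_
      · have h1 : (0:ℝ) < (Nat.factorial n : ℝ) ^ (k - 1) :=
          Real.rpow_pos_of_pos (by exact_mod_cast Nat.factorial_pos n) _
        have h2 : (0:ℝ) < A ^ n := pow_pos hApos n
        exact ne_of_gt (mul_pos h1 h2)
      · have hratio : ∀ n : ℕ, ‖f (n + 1)‖ / ‖f n‖ = ((n : ℝ) + 1) ^ (k - 1) * A := by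
          intro n
          have hfn : (0:ℝ) < f n :=
            mul_pos (Real.rpow_pos_of_pos (by exact_mod_cast Nat.factorial_pos n) _)
              (pow_pos hApos n)
        
          have hfn1 : (0:ℝ) < f (n + 1) :=
            mul_pos (Real.rpow_pos_of_pos (by exact_mod_cast Nat.factorial_pos (n+1)) _)
              (pow_pos hApos (n+1))
          rw [Real.norm_of_nonneg hfn1.le, Real.norm_of_nonneg hfn.le]
          have hfac : ((Nat.factorial (n+1) : ℝ)) = ((n:ℝ) + 1) * (Nat.factorial n : ℝ) := by
            push_cast [Nat.factorial_succ]
            ring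
          have hfacpos : (0:ℝ) < (Nat.factorial n : ℝ) := by
            exact_mod_cast Nat.factorial_pos n
          rw [hf]
          simp only
          rw [hfac, Real.mul_rpow (by positivity) hfacpos.le, pow_succ]
          field_simp
        simp_rw [hratio]
        have h1 : Filter.Tendsto (fun n : ℕ => ((n : ℝ) + 1) ^ (k - 1))
            Filter.atTop (nhds 0) := by
          have : Filter.Tendsto (fun n : ℕ => (n : ℝ) + 1) Filter.atTop Filter.atTop :=
            Filter.tendsto_atTop_add_const_right _ 1 tendsto_natCast_atTop_atTop
          have h2 := tendsto_rpow_neg_atTop (y := 1 - k) (by linarith)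
          have h3 : (fun x : ℝ => x ^ (-(1 - k))) = fun x : ℝ => x ^ (k - 1) := by
            norm_num
          rw [h3] at h2
          exact h2.comp this
        have := h1.mul_const A
        simpa using this
  refine ⟨hSummable, fun s _hs => ?_⟩
  -- Rewrite each term of the LHS
  have hterm : ∀ u ∈ (Finset.range s).powerset,
      ((Nat.factorial u.card : ℝ) * ∏ j ∈ u, α j) ^ k
        = (Nat.factorial u.card : ℝ) ^ k * ∏ j ∈ u, (α j) ^ k := by
    intro u _
    rw [Real.mul_rpow (Nat.cast_nonneg _) (Finset.prod_nonneg fun j _ => hα j),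
      ← Real.finset_prod_rpow u _ (fun j _ => hα j)]
  rw [Finset.sum_congr rfl hterm]
  -- Group by cardinality
  rw [Finset.powerset_card_disjiUnion]
  erw [Finset.sum_disjiUnion]
  rw [Finset.card_range]
  have hstep : ∀ ℓ ∈ Finset.range (s + 1),
      ∑ u ∈ Finset.powersetCard ℓ (Finset.range s),
          (Nat.factorial u.card : ℝ) ^ k * ∏ j ∈ u, (α j) ^ k ≤ f ℓ := by
    intro ℓ _
    have hcard : ∀ u ∈ Finset.powersetCard ℓ (Finset.range s), u.card = ℓ :=
      fun u hu => (Finset.mem_powersetCard.mp hu).2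
    have h1 : ∑ u ∈ Finset.powersetCard ℓ (Finset.range s),
        (Nat.factorial u.card : ℝ) ^ k * ∏ j ∈ u, (α j) ^ k
        = (Nat.factorial ℓ : ℝ) ^ k *
            ∑ u ∈ Finset.powersetCard ℓ (Finset.range s), ∏ j ∈ u, (α j) ^ k := by
      rw [Finset.mul_sum]
      exact Finset.sum_congr rfl fun u hu => by rw [hcard u hu]
    rw [h1]
    set P : ℝ := ∑ j ∈ Finset.range s, (α j) ^ k with hP
    have hP0 : 0 ≤ P := Finset.sum_nonneg fun j _ => Real.rpow_nonneg (hα j) k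
    have hPA : P ≤ A := Summable.sum_le_tsum _ (fun j _ => Real.rpow_nonneg (hα j) k) hsum
    have hkey : (Nat.factorial ℓ : ℝ) *
        ∑ u ∈ Finset.powersetCard ℓ (Finset.range s), ∏ j ∈ u, (α j) ^ k ≤ P ^ ℓ :=
      key_esymm_le (Finset.range s) (fun j => (α j) ^ k)
        (fun j => Real.rpow_nonneg (hα j) k) ℓ
    have hfacpos : (0:ℝ) < (Nat.factorial ℓ : ℝ) := by exact_mod_cast Nat.factorial_pos ℓ
    have hfack : (Nat.factorial ℓ : ℝ) ^ k
        = (Nat.factorial ℓ : ℝ) ^ (k - 1) * (Nat.factorial ℓ : ℝ) := by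
      rw [Real.rpow_sub hfacpos, Real.rpow_one]
      field_simp
    rw [hfack, mul_assoc]
    have h2 : (Nat.factorial ℓ : ℝ) *
        ∑ u ∈ Finset.powersetCard ℓ (Finset.range s), ∏ j ∈ u, (α j) ^ k ≤ A ^ ℓ :=
      hkey.trans (pow_le_pow_left₀ hP0 hPA ℓ)
    exact mul_le_mul_of_nonneg_left h2 (Real.rpow_nonneg hfacpos.le _)
  calc ∑ ℓ ∈ Finset.range (s + 1), ∑ u ∈ Finset.powersetCard ℓ (Finset.range s),
        (Nat.factorial u.card : ℝ) ^ k * ∏ j ∈ u, (α j) ^ k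
      ≤ ∑ ℓ ∈ Finset.range (s + 1), f ℓ := Finset.sum_le_sum hstep
    _ ≤ ∑' ℓ, f ℓ := Summable.sum_le_tsum _ (fun ℓ _ => hfnonneg ℓ) hSummable
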